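/- Fix M ≥ 2 and set α_k = M^{-k}, β_k = M^{2k} for k ≥ 1. The series φ(z₁,z₂) = log|z₁| + Σ_{k=1}^∞ α_k · log(|z₁| + |z₂/k|^{β_k}) converges to a plurisubharmonic function on ℂ², not identically -∞. -/

import Mathlib

open MeasureTheory Filter Metric Complex Set Topology

noncomputable section

/-- `e2 x` represents `e^{-2x}` for extended-real `x` (value `0` at `x = ⊥`,
where the correct value `+∞` cannot be represented in `ℝ`; in all statements the
`⊥`-locus is negligible or handled separately). -/
def e2 (x : EReal) : ℝ := if x = ⊥ then 0 else Real.exp (-2 * x.toReal)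

/-- Subharmonicity of `u : ℂ → EReal` on `U`: upper semicontinuity together with
the sub-mean-value inequality over all sufficiently small circles. -/
def SubharmonicOn' (u : ℂ → EReal) (U : Set ℂ) : Prop :=
  UpperSemicontinuousOn u U ∧
    ∀ z ∈ U, ∀ᶠ (r : ℝ) in 𝓝[>] (0 : ℝ),
      u z ≤ (((2 * Real.pi)⁻¹ *
        ∫ θ in (0:ℝ)..(2 * Real.pi),
          (u (z + (r : ℂ) * Complex.exp ((θ : ℂ) * Complex.I))).toReal : ℝ) : EReal)

/-- `u` is subharmonic on some open neighborhood of `z₀`. -/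
def SubharmonicNear (u : ℂ → EReal) (z₀ : ℂ) : Prop :=
  ∃ U : Set ℂ, IsOpen U ∧ z₀ ∈ U ∧ SubharmonicOn' u U

/-- The Lelong number of `u` at `z₀` equals `γ`:
`(sup_{|z-z₀|=r} u)/log r → γ` as `r → 0⁺`. -/
def HasLelongAt (u : ℂ → EReal) (z₀ : ℂ) (γ : ℝ) : Prop :=
  Tendsto (fun r : ℝ => (⨆ z ∈ sphere z₀ r, u z).toReal / Real.log r)
    (𝓝[>] (0:ℝ)) (𝓝 γ)

/-- `f` is integrable on some ball around `z₀` (local integrability near `z₀`). -/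
def LocInt (f : ℂ → ℝ) (z₀ : ℂ) : Prop :=
  ∃ r > 0, IntegrableOn f (ball z₀ r) volume

/-- Plurisubharmonicity of `u : ℂ × ℂ → EReal` on `U`: upper semicontinuity
together with subharmonicity of the restriction to every complex line. -/
def PSHOn (u : ℂ × ℂ → EReal) (U : Set (ℂ × ℂ)) : Prop :=
  UpperSemicontinuousOn u U ∧
    ∀ a b : ℂ × ℂ, SubharmonicOn' (fun t : ℂ => u (a + t • b)) {t : ℂ | a + t • b ∈ U}

/-- The (two dimensional) Lelong number of `u` at `x` equals `γ`:
`(sup_{|z-x|≤r} u)/log r → γ` as `r → 0⁺`. -/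
def HasLelongAt2 (u : ℂ × ℂ → EReal) (x : ℂ × ℂ) (γ : ℝ) : Prop :=
  Tendsto (fun r : ℝ => (⨆ z ∈ closedBall x r, u z).toReal / Real.log r)
    (𝓝[>] (0:ℝ)) (𝓝 γ)

/-- `f` is integrable on some ball around `x` in `ℂ²`. -/
def LocInt2 (f : ℂ × ℂ → ℝ) (x : ℂ × ℂ) : Prop :=
  ∃ r > 0, IntegrableOn f (ball x r) volume

/-- The k-th term (k ≥ 1) of the Guan–Li series:
`α_k · log(|z₁| + |z₂/k|^{β_k})` with `α_k = M^{-k}`, `β_k = M^{2k}`. -/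
def phiTerm (M : ℝ) (k : ℕ) (z : ℂ × ℂ) : ℝ :=
  M ^ (-(k : ℤ)) * Real.log (‖z.1‖ +
    (‖z.2‖ / (k : ℝ)) ^ (M ^ (2 * k) : ℝ))

/-- The plurisubharmonic weight
`φ(z) = log|z₁| + ∑_{k≥1} M^{-k} log(|z₁| + |z₂/k|^{M^{2k}})`,
with value `⊥ = -∞` on `{z₁ = 0}` (where the series diverges to `-∞`). -/
def phi (M : ℝ) (z : ℂ × ℂ) : EReal :=
  if z.1 = 0 then ⊥ else
    ((Real.log (‖z.1‖) + ∑' k : ℕ, phiTerm M (k + 1) z : ℝ) : EReal)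



section GuanLiAux

set_option maxHeartbeats 1000000

open scoped ENNReal NNReal

lemma meanvalue (F : ℂ → ℂ) (hF : ∀ z ∈ closedBall (0:ℂ) 1, DifferentiableAt ℂ F z) :
    ∫ θ in (0:ℝ)..(2*Real.pi), F (circleMap 0 1 θ) = 2*Real.pi*F 0 := by
  have hd : DiffContOnCl ℂ F (ball (0:ℂ) 1) := by
    apply DifferentiableOn.diffContOnCl
    rw [closure_ball (0:ℂ) one_ne_zero]
    exact fun z hz => (hF z hz).differentiableWithinAt
  have h := hd.circleIntegral_sub_inv_smul (mem_ball_self one_pos)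
  rw [circleIntegral] at h
  have e1 : ∀ θ : ℝ, deriv (circleMap 0 1) θ • ((circleMap 0 1 θ - 0)⁻¹ • F (circleMap 0 1 θ))
      = Complex.I * F (circleMap 0 1 θ) := by
    intro θ
    have hz : circleMap 0 1 θ ≠ 0 := circleMap_ne_center one_ne_zero
    rw [deriv_circleMap]
    simp only [smul_eq_mul, sub_zero, circleMap_zero]
    field_simp [circleMap]
  rw [intervalIntegral.integral_congr (fun θ _ => e1 θ)] at h
  rw [intervalIntegral.integral_const_mul] at h
  have hI : (Complex.I : ℂ) ≠ 0 := Complex.I_ne_zero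
  simp only [smul_eq_mul] at h
  exact mul_left_cancel₀ hI (h.trans (by ring))

/-- the key circle-average computation for `log |c + w e^{iθ}|`, small `w`. -/
lemma integral_log_abs_affine (c w : ℂ) (h : ‖w‖ < ‖c‖) :
    ∫ θ in (0:ℝ)..(2*Real.pi), Real.log (‖c + w * Complex.exp ((θ:ℂ) * Complex.I)‖)
      = 2*Real.pi*Real.log (‖c‖) := by
  have hcabs : 0 < ‖c‖ := (norm_nonneg w).trans_lt h
  have hc : c ≠ 0 := norm_pos_iff.mp hcabs
  set u : ℂ := w / c with hu_def
  have hu : ‖u‖ < 1 := by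
    rw [hu_def, norm_div, div_lt_one hcabs]
    exact h
  have key : ∀ z ∈ closedBall (0:ℂ) 1, (0:ℝ) < (1 + u * z).re := by
    intro z hz
    have h1 : ‖u * z‖ < 1 := by
      rw [norm_mul]
      calc ‖u‖ * ‖z‖ ≤ ‖u‖ * 1 := by
            apply mul_le_mul_of_nonneg_left _ (by positivity)
            simpa [Complex.dist_eq] using hz
        _ < 1 := by simpa using hu
    have h2 : -(1:ℝ) < (u*z).re := by
      have := Complex.abs_re_le_norm (u*z)
      have := neg_abs_le (u*z).re
      linarith
    simp only [Complex.add_re, Complex.one_re]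
    linarith
  have hF : ∀ z ∈ closedBall (0:ℂ) 1, DifferentiableAt ℂ (fun z => Complex.log (1 + u*z)) z := by
    intro z hz
    apply DifferentiableAt.clog
    · exact (differentiableAt_const _).add ((differentiableAt_const _).mul differentiableAt_id)
    · exact Or.inl (key z hz)
  have hmv := meanvalue _ hF
  simp only [mul_zero, add_zero, Complex.log_one, mul_zero] at hmv
  -- continuity of θ ↦ log (1 + u e^{iθ})
  have hcont : Continuous fun θ : ℝ => Complex.log (1 + u * circleMap 0 1 θ) := by
    rw [continuous_iff_continuousAt]
    intro θ
    exact ((hF _ (circleMap_mem_closedBall _ zero_le_one θ)).continuousAt).comp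
      (continuous_circleMap 0 1).continuousAt
  have hInt : IntervalIntegrable (fun θ : ℝ => Complex.log (1 + u * circleMap 0 1 θ))
      volume 0 (2*Real.pi) := hcont.intervalIntegrable _ _
  -- take real parts
  have hre : ∫ θ in (0:ℝ)..(2*Real.pi), (Complex.log (1 + u * circleMap 0 1 θ)).re = 0 := by
    have := Complex.reCLM.intervalIntegral_comp_comm hInt
    simp only [Complex.reCLM_apply] at this
    rw [this, hmv]; simp
  have habs : ∀ θ : ℝ, (Complex.log (1 + u * circleMap 0 1 θ)).re
      = Real.log (‖1 + u * circleMap 0 1 θ‖) := fun θ => Complex.log_re _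
  have hsplit : ∀ θ : ℝ, Real.log (‖c + w * Complex.exp ((θ:ℂ) * Complex.I)‖)
      = Real.log (‖c‖) + Real.log (‖1 + u * circleMap 0 1 θ‖) := by
    intro θ
    have hne : (1 + u * circleMap 0 1 θ) ≠ 0 := by
      intro h0
      have := key _ (circleMap_mem_closedBall _ zero_le_one θ)
      rw [h0] at this; simp at this
    have heq : c + w * Complex.exp ((θ:ℂ) * Complex.I) = c * (1 + u * circleMap 0 1 θ) := by
      rw [circleMap, hu_def]; simp only [Complex.ofReal_one, mul_one, zero_add]; field_simp
    rw [heq, norm_mul, Real.log_mul (norm_ne_zero_iff.mpr hc) (norm_ne_zero_iff.mpr hne)]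
  rw [intervalIntegral.integral_congr (fun θ _ => hsplit θ)]
  have hInt2 : IntervalIntegrable (fun θ : ℝ => Real.log (‖1 + u * circleMap 0 1 θ‖))
      volume 0 (2*Real.pi) := by
    have : Continuous fun θ : ℝ => Real.log (‖1 + u * circleMap 0 1 θ‖) := by
      simp only [← habs]; exact Complex.continuous_re.comp hcont
    exact this.intervalIntegrable _ _
  rw [intervalIntegral.integral_add (intervalIntegrable_const) hInt2]
  simp only [← habs]
  rw [hre, intervalIntegral.integral_const]
  simp [mul_comm]

lemma abs_log_le {A B t : ℝ} (hA : 0 < A) (h1 : A ≤ t) (h2 : t ≤ B) :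
    |Real.log t| ≤ |Real.log A| + |Real.log B| := by
  have ht : 0 < t := hA.trans_le h1
  rcases le_or_gt 0 (Real.log t) with h | h
  · rw [_root_.abs_of_nonneg h]
    calc Real.log t ≤ Real.log B := (Real.log_le_log_iff ht (ht.trans_le h2)).mpr h2
      _ ≤ |Real.log B| := le_abs_self _
      _ ≤ _ := le_add_of_nonneg_left (abs_nonneg _)
  · rw [_root_.abs_of_neg h]
    calc -Real.log t ≤ -Real.log A := neg_le_neg ((Real.log_le_log_iff hA ht).mpr h1)
      _ ≤ |Real.log A| := neg_le_abs _
      _ ≤ _ := le_add_of_nonneg_right (abs_nonneg _)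

/-- uniform bound on the rpow part -/
def Ymax (M C : ℝ) : ℝ := max 1 (C ^ ((M ^ (2 * (Nat.ceil C + 1)) : ℝ)))

lemma Ymax_nonneg (M C : ℝ) : 0 ≤ Ymax M C := le_trans zero_le_one (le_max_left _ _)

lemma Ybound {M : ℝ} (hM : 2 ≤ M) {C : ℝ} (hC : 1 ≤ C) {x : ℝ} (hx : 0 ≤ x) (hxC : x ≤ C)
    (k : ℕ) : (x / ((k+1) : ℕ)) ^ ((M ^ (2 * (k+1)) : ℝ)) ≤ Ymax M C := by
  have hM1 : (1:ℝ) ≤ M := by linarith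
  have hM0 : (0:ℝ) ≤ M := by linarith
  have hk1 : (0:ℝ) < ((k+1 : ℕ) : ℝ) := by positivity
  have hexp : (0:ℝ) ≤ (M ^ (2 * (k+1)) : ℝ) := by positivity
  rcases le_or_gt C ((k+1 : ℕ) : ℝ) with hk | hk
  · refine le_trans (Real.rpow_le_one (by positivity) ?_ hexp) (le_max_left _ _)
    rw [div_le_one hk1]
    exact hxC.trans hk
  · refine le_trans ?_ (le_max_right _ _)
    have hkc : k + 1 ≤ Nat.ceil C + 1 := by
      have : k + 1 < Nat.ceil C := Nat.lt_ceil.mpr (by exact_mod_cast hk)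
      omega
    calc (x / ((k+1:ℕ):ℝ)) ^ ((M ^ (2 * (k+1)) : ℝ))
        ≤ C ^ ((M ^ (2 * (k+1)) : ℝ)) := by
          apply Real.rpow_le_rpow (by positivity) _ hexp
          exact le_trans (div_le_self hx (by exact_mod_cast Nat.one_le_iff_ne_zero.mpr (Nat.succ_ne_zero k))) hxC
      _ ≤ C ^ ((M ^ (2 * (Nat.ceil C + 1)) : ℝ)) := by
          apply Real.rpow_le_rpow_of_exponent_le hC
          exact_mod_cast pow_le_pow_right₀ hM1 (by omega)

lemma phiTerm_abs_le {M : ℝ} (hM : 2 ≤ M) {z : ℂ × ℂ} {A D C : ℝ} (hA : 0 < A)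
    (h1 : A ≤ ‖z.1‖) (hD : ‖z.1‖ ≤ D) (hC : 1 ≤ C)
    (h2 : ‖z.2‖ ≤ C) (k : ℕ) :
    |phiTerm M (k+1) z| ≤ M ^ (-(k+1:ℕ) : ℤ) * (|Real.log A| + |Real.log (D + Ymax M C)|) := by
  have hM0 : (0:ℝ) < M := by linarith
  rw [phiTerm, abs_mul, _root_.abs_of_nonneg (zpow_nonneg hM0.le _)]
  apply mul_le_mul_of_nonneg_left _ (zpow_nonneg hM0.le _)
  apply abs_log_le hA
  · exact le_trans h1 (le_add_of_nonneg_right (Real.rpow_nonneg (by positivity) _))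
  · exact add_le_add hD (Ybound hM hC (norm_nonneg _) h2 k)

lemma summable_geom_mul {M : ℝ} (hM : 2 ≤ M) (K : ℝ) :
    Summable (fun k : ℕ => M ^ (-(k+1:ℕ) : ℤ) * K) := by
  have hM0 : (0:ℝ) < M := by linarith
  have h1 : M⁻¹ < 1 := inv_lt_one_of_one_lt₀ (by linarith)
  have he : ∀ k : ℕ, M ^ (-(k+1:ℕ) : ℤ) * K = (M⁻¹ * K) * M⁻¹ ^ k := by
    intro k
    rw [zpow_neg, zpow_natCast, ← inv_pow, pow_succ]
    ring
  rw [funext he]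
  exact (summable_geometric_of_lt_one (by positivity) h1).mul_left _

lemma summable_phiTerm {M : ℝ} (hM : 2 ≤ M) (z : ℂ × ℂ) (hz : z.1 ≠ 0) :
    Summable (fun k : ℕ => phiTerm M (k+1) z) := by
  have hA : 0 < ‖z.1‖ := norm_pos_iff.mpr hz
  apply Summable.of_norm_bounded
    (summable_geom_mul hM (|Real.log (‖z.1‖)| +
      |Real.log (‖z.1‖ + Ymax M (max 1 (‖z.2‖)))|))
  intro k
  rw [Real.norm_eq_abs]
  exact phiTerm_abs_le hM hA le_rfl le_rfl (le_max_left _ _) (le_max_right _ _) k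

lemma continuousAt_phiTerm {M : ℝ} (hM : 2 ≤ M) (k : ℕ) {z : ℂ × ℂ} (hz : z.1 ≠ 0) :
    ContinuousAt (fun w => phiTerm M (k+1) w) z := by
  have hM0 : (0:ℝ) < M := by linarith
  have hbase : ContinuousAt (fun w : ℂ × ℂ => ‖w.2‖ / ((k+1:ℕ) : ℝ)) z :=
    ((continuous_norm.comp continuous_snd).div_const _).continuousAt
  have hr : ContinuousAt (fun w : ℂ × ℂ =>
      (‖w.2‖ / ((k+1:ℕ) : ℝ)) ^ (M ^ (2 * (k+1)) : ℝ)) z :=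
    (Real.continuousAt_rpow_const _ _ (Or.inr (by positivity))).comp hbase
  have harg : ContinuousAt (fun w : ℂ × ℂ => ‖w.1‖ +
      (‖w.2‖ / ((k+1:ℕ) : ℝ)) ^ (M ^ (2 * (k+1)) : ℝ)) z :=
    ((continuous_norm.comp continuous_fst).continuousAt).add hr
  have hpos : 0 < ‖z.1‖ +
      (‖z.2‖ / ((k+1:ℕ) : ℝ)) ^ (M ^ (2 * (k+1)) : ℝ) :=
    add_pos_of_pos_of_nonneg (norm_pos_iff.mpr hz) (Real.rpow_nonneg (by positivity) _)
  exact continuousAt_const.mul (ContinuousAt.comp (x := z) (Real.continuousAt_log hpos.ne') harg)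

lemma continuousAt_S {M : ℝ} (hM : 2 ≤ M) {z : ℂ × ℂ} (hz : z.1 ≠ 0) :
    ContinuousAt (fun w => ∑' k : ℕ, phiTerm M (k+1) w) z := by
  have hA : 0 < ‖z.1‖ := norm_pos_iff.mpr hz
  set A := ‖z.1‖ / 2 with hAdef
  set D := ‖z.1‖ + 1 with hDdef
  set C := ‖z.2‖ + 1 with hCdef
  have hC1 : (1:ℝ) ≤ C := le_add_of_nonneg_left (norm_nonneg _)
  set V : Set (ℂ × ℂ) := ((fun w : ℂ × ℂ => ‖w.1‖) ⁻¹' (Ioi A ∩ Iio D)) ∩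
    ((fun w : ℂ × ℂ => ‖w.2‖) ⁻¹' Iio C) with hVdef
  have hVopen : IsOpen V :=
    (((isOpen_Ioi.inter isOpen_Iio).preimage (continuous_norm.comp continuous_fst)).inter
      (isOpen_Iio.preimage (continuous_norm.comp continuous_snd)))
  have hzV : z ∈ V := by
    refine ⟨⟨half_lt_self hA, ?_⟩, ?_⟩
    · show ‖z.1‖ < D; simp [hDdef]
    · show ‖z.2‖ < C; simp [hCdef]
  have hcont : ContinuousOn (fun w => ∑' k : ℕ, phiTerm M (k+1) w) V := by
    apply continuousOn_tsum
      (f := fun k w => phiTerm M (k+1) w)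
      (u := fun k => M ^ (-(k+1:ℕ) : ℤ) * (|Real.log A| + |Real.log (D + Ymax M C)|))
    · intro k w hw
      have : w.1 ≠ 0 := by
        intro h0
        have h1 : A < ‖w.1‖ := hw.1.1
        rw [h0] at h1
        simp only [norm_zero] at h1
        have h2 : (0:ℝ) ≤ A := by positivity
        exact absurd h1 h2.not_gt
      exact (continuousAt_phiTerm hM k this).continuousWithinAt
    · exact summable_geom_mul hM _
    · intro k w hw
      rw [Real.norm_eq_abs]
      exact phiTerm_abs_le hM (by positivity) hw.1.1.le hw.1.2.le hC1 hw.2.le k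
  exact hcont.continuousAt (hVopen.mem_nhds hzV)

lemma log_sum_ge {X Y p q : ℝ} (hX : 0 < X) (hY : 0 < Y) (hp : 0 < p) (hq : 0 < q)
    (hpq : p + q = 1) : p * Real.log (X/p) + q * Real.log (Y/q) ≤ Real.log (X + Y) := by
  have h := strictConcaveOn_log_Ioi.concaveOn.2 (mem_Ioi.mpr (div_pos hX hp))
    (mem_Ioi.mpr (div_pos hY hq)) hp.le hq.le hpq
  simp only [smul_eq_mul] at h
  have e1 : p * (X/p) = X := by field_simp
  have e2 : q * (Y/q) = Y := by field_simp
  rwa [e1, e2] at h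

/-- upper bound for a single term when `|w₁| ≤ 1`, `|w₂| ≤ C` and `w₁ ≠ 0`. -/
lemma phiTerm_le {M : ℝ} (hM : 2 ≤ M) {w : ℂ × ℂ} {C : ℝ} (hC : 1 ≤ C) (hw1 : w.1 ≠ 0)
    (h1 : ‖w.1‖ ≤ 1) (h2 : ‖w.2‖ ≤ C) (k : ℕ) :
    phiTerm M (k+1) w ≤ M ^ (-(k+1:ℕ) : ℤ) * |Real.log (1 + Ymax M C)| := by
  have hM0 : (0:ℝ) < M := by linarith
  rw [phiTerm]
  apply mul_le_mul_of_nonneg_left _ (zpow_nonneg hM0.le _)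
  have hpos : 0 < ‖w.1‖ +
      (‖w.2‖ / ((k+1:ℕ) : ℝ)) ^ (M ^ (2 * (k+1)) : ℝ) :=
    add_pos_of_pos_of_nonneg (norm_pos_iff.mpr hw1) (Real.rpow_nonneg (by positivity) _)
  calc Real.log _ ≤ Real.log (1 + Ymax M C) := by
        apply (Real.log_le_log_iff hpos (by nlinarith [Ymax_nonneg M C])).mpr
        exact add_le_add h1 (Ybound hM hC (norm_nonneg _) h2 k)
    _ ≤ |Real.log (1 + Ymax M C)| := le_abs_self _

lemma usc_phi {M : ℝ} (hM : 2 ≤ M) : UpperSemicontinuous (phi M) := by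
  intro z
  rcases eq_or_ne z.1 0 with h1 | h1
  · -- z.1 = 0 : show phi → small
    intro y hy
    rw [phi, if_pos h1] at hy
    rcases eq_or_ne y ⊤ with rfl | hytop
    · filter_upwards with w
      rw [phi]
      split
      · exact bot_lt_top
      · exact EReal.coe_lt_top _
    · set c := y.toReal with hcdef
      have hc : (c : EReal) = y := EReal.coe_toReal hytop hy.ne'
      set C := max 1 (‖z.2‖ + 1) with hCdef
      have hC1 : (1:ℝ) ≤ C := le_max_left _ _
      set K := |Real.log (1 + Ymax M C)| with hKdef
      set B := ∑' k : ℕ, M ^ (-(k+1:ℕ) : ℤ) * K with hBdef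
      set ε := min 1 (Real.exp (c - B)) with hεdef
      have hεpos : 0 < ε := lt_min one_pos (Real.exp_pos _)
      have hWopen : IsOpen {w : ℂ × ℂ | ‖w.1‖ < ε ∧
          ‖w.2‖ < ‖z.2‖ + 1} := by
        apply IsOpen.inter
        · exact isOpen_lt (continuous_norm.comp continuous_fst) continuous_const
        · exact isOpen_lt (continuous_norm.comp continuous_snd) continuous_const
      have hzW : z ∈ {w : ℂ × ℂ | ‖w.1‖ < ε ∧
          ‖w.2‖ < ‖z.2‖ + 1} := by
        constructor
        · rw [h1]; simpa using hεpos
        · exact lt_add_one _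
      filter_upwards [hWopen.mem_nhds hzW] with w hw
      rcases eq_or_ne w.1 0 with hw1 | hw1
      · rw [phi, if_pos hw1]; exact hy
      · rw [phi, if_neg hw1, ← hc, EReal.coe_lt_coe_iff]
        have htsum : ∑' k : ℕ, phiTerm M (k+1) w ≤ B := by
          apply Summable.tsum_le_tsum _ (summable_phiTerm hM w hw1) (summable_geom_mul hM K)
          intro k
          exact phiTerm_le hM hC1 hw1 (hw.1.le.trans (min_le_left _ _))
            (hw.2.le.trans (le_max_right _ _)) k
        have hlog : Real.log (‖w.1‖) < c - B := by
          have h2 : ‖w.1‖ < Real.exp (c - B) := hw.1.trans_le (min_le_right _ _)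
          calc Real.log (‖w.1‖) < Real.log (Real.exp (c - B)) :=
                Real.log_lt_log (norm_pos_iff.mpr hw1) h2
            _ = c - B := Real.log_exp _
        linarith
  · -- z.1 ≠ 0 : phi is continuous at z
    have hopen : IsOpen {w : ℂ × ℂ | w.1 ≠ 0} := isOpen_compl_singleton.preimage continuous_fst
    have heq : ∀ᶠ w in 𝓝 z, phi M w =
        ((Real.log (‖w.1‖) + ∑' k : ℕ, phiTerm M (k + 1) w : ℝ) : EReal) := by
      filter_upwards [hopen.mem_nhds h1] with w hw
      rw [phi, if_neg hw]
    have hcont : ContinuousAt (fun w : ℂ × ℂ =>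
        ((Real.log (‖w.1‖) + ∑' k : ℕ, phiTerm M (k + 1) w : ℝ) : EReal)) z := by
      apply ContinuousAt.comp (x := z) continuous_coe_real_ereal.continuousAt
      exact (ContinuousAt.comp (x := z) (Real.continuousAt_log (norm_ne_zero_iff.mpr h1 : ‖z.1‖ ≠ 0))
        (continuous_norm.comp continuous_fst).continuousAt).add (continuousAt_S hM h1)
    have hcont' : ContinuousAt (phi M) z := hcont.congr (EventuallyEq.symm heq)
    intro y hy
    exact hcont' (isOpen_Iio.mem_nhds hy)

lemma abs_add_lower (c x : ℂ) : ‖c‖ - ‖x‖ ≤ ‖c + x‖ := by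
  have h := norm_add_le (c + x) (-x)
  simp only [add_neg_cancel_right, map_neg, norm_neg] at h
  linarith

lemma abs_E (r : ℝ) (hr : 0 ≤ r) (θ : ℝ) :
    ‖(r:ℂ) * Complex.exp ((θ:ℂ) * Complex.I)‖ = r := by
  rw [norm_mul, Complex.norm_exp_ofReal_mul_I, Complex.norm_real, Real.norm_eq_abs, mul_one, _root_.abs_of_nonneg hr]

lemma key_term_ineq {M : ℝ} (hM : 2 ≤ M) (c b₁ d b₂ : ℂ) {r : ℝ} (hr : 0 < r)
    (hc : r * ‖b₁‖ < ‖c‖)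
    (hd : d = 0 ∨ r * ‖b₂‖ < ‖d‖) (k : ℕ) :
    2 * Real.pi * phiTerm M (k+1) (c, d) ≤
      ∫ θ in (0:ℝ)..(2*Real.pi),
        phiTerm M (k+1) (c + (r:ℂ) * Complex.exp ((θ:ℂ) * Complex.I) * b₁,
                         d + (r:ℂ) * Complex.exp ((θ:ℂ) * Complex.I) * b₂) := by
  have hM0 : (0:ℝ) < M := by linarith
  set α : ℝ := M ^ (-(k+1:ℕ) : ℤ) with hα
  set β : ℝ := M ^ (2 * (k+1)) with hβ
  have hβpos : 0 < β := by positivity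
  set E : ℝ → ℂ := fun θ => (r:ℂ) * Complex.exp ((θ:ℂ) * Complex.I) with hE
  have habsE : ∀ θ : ℝ, ‖E θ‖ = r := fun θ => abs_E r hr.le θ
  have hX0 : 0 < ‖c‖ := (mul_nonneg hr.le (norm_nonneg b₁)).trans_lt hc
  have hc0 : c ≠ 0 := norm_pos_iff.mp hX0
  -- lower bound for |f| on the circle
  have hXpos : ∀ θ : ℝ, 0 < ‖c + E θ * b₁‖ := by
    intro θ
    have h1 : ‖E θ * b₁‖ = r * ‖b₁‖ := by rw [norm_mul, habsE]
    have := abs_add_lower c (E θ * b₁)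
    rw [h1] at this
    linarith
  -- continuity facts
  have hEcont : Continuous E :=
    continuous_const.mul (Complex.continuous_exp.comp (Complex.continuous_ofReal.mul
      continuous_const))
  have habsf : Continuous fun θ : ℝ => ‖c + E θ * b₁‖ :=
    continuous_norm.comp (continuous_const.add (hEcont.mul continuous_const))
  have habsg : Continuous fun θ : ℝ => ‖d + E θ * b₂‖ :=
    continuous_norm.comp (continuous_const.add (hEcont.mul continuous_const))
  have hlogf : Continuous fun θ : ℝ => Real.log (‖c + E θ * b₁‖) := by
    rw [continuous_iff_continuousAt]
    exact fun θ => ContinuousAt.comp (x := θ) (Real.continuousAt_log (hXpos θ).ne')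
      habsf.continuousAt
  -- the circle average of log|f|
  have hIX : ∫ θ in (0:ℝ)..(2*Real.pi), Real.log (‖c + E θ * b₁‖)
      = 2*Real.pi*Real.log (‖c‖) := by
    have : ∀ θ ∈ uIcc (0:ℝ) (2*Real.pi),
        Real.log (‖c + E θ * b₁‖) =
        Real.log (‖c + ((r:ℂ)*b₁) * Complex.exp ((θ:ℂ) * Complex.I)‖) := by
      intro θ _; rw [hE]; ring_nf
    rw [intervalIntegral.integral_congr this]
    apply integral_log_abs_affine
    rw [norm_mul, Complex.norm_real, Real.norm_eq_abs, _root_.abs_of_nonneg hr.le]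
    exact hc
  -- the functions X, Y on the circle
  set Y : ℝ → ℝ := fun θ => (‖d + E θ * b₂‖ / ((k+1:ℕ) : ℝ)) ^ β with hY
  have hYcont : Continuous Y := by
    rw [continuous_iff_continuousAt]
    intro θ
    exact ContinuousAt.comp (x := θ)
      (Real.continuousAt_rpow_const _ _ (Or.inr hβpos.le))
      ((habsg.div_const _).continuousAt)
  have hYnonneg : ∀ θ, 0 ≤ Y θ := fun θ => Real.rpow_nonneg (by positivity) _
  have hargpos : ∀ θ : ℝ, 0 < ‖c + E θ * b₁‖ + Y θ :=
    fun θ => add_pos_of_pos_of_nonneg (hXpos θ) (hYnonneg θ)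
  have hG : Continuous fun θ : ℝ => Real.log (‖c + E θ * b₁‖ + Y θ) := by
    rw [continuous_iff_continuousAt]
    intro θ
    exact ContinuousAt.comp (x := θ) (Real.continuousAt_log (hargpos θ).ne')
      ((habsf.add hYcont).continuousAt)
  -- reduce to the statement with α removed
  have hmain : 2 * Real.pi * Real.log (‖c‖ + (‖d‖ / ((k+1:ℕ):ℝ)) ^ β)
      ≤ ∫ θ in (0:ℝ)..(2*Real.pi), Real.log (‖c + E θ * b₁‖ + Y θ) := by
    rcases hd with hd0 | hdpos
    · -- d = 0 : Y₀ = 0 and log X ≤ log (X + Y)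
      subst hd0
      have h0 : (‖(0:ℂ)‖ / ((k+1:ℕ):ℝ)) ^ β = 0 := by
        simp [Real.zero_rpow hβpos.ne']
      rw [h0, add_zero, ← hIX]
      apply intervalIntegral.integral_mono_on Real.two_pi_pos.le
        (hlogf.intervalIntegrable _ _) (hG.intervalIntegrable _ _)
      intro θ _
      exact (Real.log_le_log_iff (hXpos θ) (hargpos θ)).mpr
        (le_add_of_nonneg_right (hYnonneg θ))
    · -- d ≠ 0
      have hd0 : 0 < ‖d‖ := (mul_nonneg hr.le (norm_nonneg b₂)).trans_lt hdpos
      have hgpos : ∀ θ : ℝ, 0 < ‖d + E θ * b₂‖ := by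
        intro θ
        have h1 : ‖E θ * b₂‖ = r * ‖b₂‖ := by rw [norm_mul, habsE]
        have := abs_add_lower d (E θ * b₂)
        rw [h1] at this
        linarith
      have hYpos : ∀ θ : ℝ, 0 < Y θ := fun θ =>
        Real.rpow_pos_of_pos (div_pos (hgpos θ) (by positivity)) _
      set X₀ : ℝ := ‖c‖ with hX₀def
      set Y₀ : ℝ := (‖d‖ / ((k+1:ℕ):ℝ)) ^ β with hY₀def
      have hY₀pos : 0 < Y₀ := Real.rpow_pos_of_pos (by positivity) _
      set T : ℝ := X₀ + Y₀ with hT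
      have hTpos : 0 < T := add_pos hX0 hY₀pos
      set p : ℝ := X₀ / T with hp
      set q : ℝ := Y₀ / T with hq
      have hppos : 0 < p := div_pos hX0 hTpos
      have hqpos : 0 < q := div_pos hY₀pos hTpos
      have hpq : p + q = 1 := by rw [hp, hq, ← add_div, div_self hTpos.ne']
      -- pointwise lower bound
      have hpt : ∀ θ ∈ Icc (0:ℝ) (2*Real.pi),
          p * Real.log (‖c + E θ * b₁‖) + q * Real.log (Y θ)
            - (p * Real.log p + q * Real.log q)
          ≤ Real.log (‖c + E θ * b₁‖ + Y θ) := by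
        intro θ _
        have h := log_sum_ge (hXpos θ) (hYpos θ) hppos hqpos hpq
        rw [Real.log_div (hXpos θ).ne' hppos.ne', Real.log_div (hYpos θ).ne' hqpos.ne'] at h
        linarith
      -- integral of log Y
      have hIg : ∫ θ in (0:ℝ)..(2*Real.pi), Real.log (‖d + E θ * b₂‖)
          = 2*Real.pi*Real.log (‖d‖) := by
        have : ∀ θ ∈ uIcc (0:ℝ) (2*Real.pi),
            Real.log (‖d + E θ * b₂‖) =
            Real.log (‖d + ((r:ℂ)*b₂) * Complex.exp ((θ:ℂ) * Complex.I)‖) := by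
          intro θ _; rw [hE]; ring_nf
        rw [intervalIntegral.integral_congr this]
        apply integral_log_abs_affine
        rw [norm_mul, Complex.norm_real, Real.norm_eq_abs, _root_.abs_of_nonneg hr.le]
        exact hdpos
      have hlogY : ∀ θ : ℝ, Real.log (Y θ)
          = β * Real.log (‖d + E θ * b₂‖) - β * Real.log ((k+1:ℕ):ℝ) := by
        intro θ
        rw [hY]
        rw [Real.log_rpow (div_pos (hgpos θ) (by positivity))]
        rw [Real.log_div (hgpos θ).ne' (by positivity)]
        ring
      have hlogYcont : Continuous fun θ : ℝ => Real.log (Y θ) := by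
        simp only [hlogY]
        apply Continuous.sub _ continuous_const
        apply Continuous.mul continuous_const
        rw [continuous_iff_continuousAt]
        intro θ
        exact ContinuousAt.comp (x := θ) (Real.continuousAt_log (hgpos θ).ne')
          habsg.continuousAt
      -- integrate the pointwise bound
      have hle := intervalIntegral.integral_mono_on (μ := volume) Real.two_pi_pos.le
        (((((continuous_const.fun_mul hlogf : Continuous fun θ : ℝ => p * Real.log (‖c + E θ * b₁‖))).fun_add ((continuous_const.fun_mul hlogYcont : Continuous fun θ : ℝ => q * Real.log (Y θ)))).fun_sub
          continuous_const).intervalIntegrable (0:ℝ) (2*Real.pi))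
        (hG.intervalIntegrable _ _) hpt
      -- compute the LHS integral
      have hIlogY : ∫ θ in (0:ℝ)..(2*Real.pi), Real.log (Y θ)
          = 2*Real.pi*Real.log Y₀ := by
        rw [intervalIntegral.integral_congr (fun θ _ => hlogY θ)]
        rw [intervalIntegral.integral_sub ((Continuous.fun_mul continuous_const (by
            rw [continuous_iff_continuousAt]
            exact fun θ => ContinuousAt.comp (x := θ)
              (Real.continuousAt_log (hgpos θ).ne') habsg.continuousAt)).intervalIntegrable _ _)
          (intervalIntegrable_const)]
        rw [intervalIntegral.integral_const_mul, hIg, intervalIntegral.integral_const]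
        rw [hY₀def, Real.log_rpow (by positivity), Real.log_div hd0.ne' (by positivity)]
        simp only [smul_eq_mul, sub_zero]
        ring
      have hIF : ∫ θ in (0:ℝ)..(2*Real.pi),
          (p * Real.log (‖c + E θ * b₁‖) + q * Real.log (Y θ)
            - (p * Real.log p + q * Real.log q))
          = 2*Real.pi * (p * Real.log X₀ + q * Real.log Y₀ - (p*Real.log p + q*Real.log q)) := by
        rw [intervalIntegral.integral_sub ((((continuous_const.fun_mul hlogf : Continuous fun θ : ℝ => p * Real.log (‖c + E θ * b₁‖))).fun_add
          ((continuous_const.fun_mul hlogYcont : Continuous fun θ : ℝ => q * Real.log (Y θ)))).intervalIntegrable _ _) intervalIntegrable_const]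
        rw [intervalIntegral.integral_add (((continuous_const.fun_mul hlogf : Continuous fun θ : ℝ => p * Real.log (‖c + E θ * b₁‖))).intervalIntegrable _ _)
          (((continuous_const.fun_mul hlogYcont : Continuous fun θ : ℝ => q * Real.log (Y θ))).intervalIntegrable _ _)]
        rw [intervalIntegral.integral_const_mul, intervalIntegral.integral_const_mul,
          hIX, hIlogY, intervalIntegral.integral_const]
        simp only [smul_eq_mul, sub_zero]
        ring
      rw [hIF] at hle
      refine le_trans (le_of_eq ?_) hle
      -- algebra: log T = p log X₀ + q log Y₀ - p log p - q log q
      have e1 : X₀ / p = T := by rw [hp]; field_simp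
      have e2 : Y₀ / q = T := by rw [hq]; field_simp
      have h := log_sum_ge hX0 hY₀pos hppos hqpos hpq  -- not equality; do directly
      have e3 : p * Real.log (X₀/p) + q * Real.log (Y₀/q) = Real.log T := by
        rw [e1, e2, ← add_mul, hpq, one_mul]
      rw [Real.log_div hX0.ne' hppos.ne', Real.log_div hY₀pos.ne' hqpos.ne'] at e3
      rw [← hT] at *
      rw [show Real.log (X₀ + Y₀) = Real.log T by rw [hT]]
      rw [← e3]
      ring
  -- put α back
  have hint : ∀ θ : ℝ, phiTerm M (k+1) (c + E θ * b₁, d + E θ * b₂)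
      = α * Real.log (‖c + E θ * b₁‖ + Y θ) := by
    intro θ; rfl
  calc 2 * Real.pi * phiTerm M (k+1) (c, d)
      = α * (2 * Real.pi * Real.log (‖c‖ + (‖d‖ / ((k+1:ℕ):ℝ)) ^ β)) := by
        rw [phiTerm]; ring
    _ ≤ α * ∫ θ in (0:ℝ)..(2*Real.pi), Real.log (‖c + E θ * b₁‖ + Y θ) :=
        mul_le_mul_of_nonneg_left hmain (by positivity)
    _ = ∫ θ in (0:ℝ)..(2*Real.pi),
          phiTerm M (k+1) (c + E θ * b₁, d + E θ * b₂) := by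
        rw [← intervalIntegral.integral_const_mul]
        exact intervalIntegral.integral_congr (fun θ _ => (hint θ).symm)

lemma submean {M : ℝ} (hM : 2 ≤ M) (a b : ℂ × ℂ) (t₀ : ℂ) :
    ∀ᶠ (r : ℝ) in 𝓝[>] (0 : ℝ),
      phi M (a + t₀ • b) ≤ (((2 * Real.pi)⁻¹ *
        ∫ θ in (0:ℝ)..(2 * Real.pi),
          (phi M (a + (t₀ + (r : ℂ) * Complex.exp ((θ : ℂ) * Complex.I)) • b)).toReal : ℝ)
          : EReal) := by
  have hM0 : (0:ℝ) < M := by linarith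
  set c : ℂ := a.1 + t₀ * b.1 with hcdef
  set d : ℂ := a.2 + t₀ * b.2 with hddef
  have hcomp : ∀ s : ℂ, a + (t₀ + s) • b = (c + s * b.1, d + s * b.2) := by
    intro s
    rw [Prod.ext_iff]
    constructor
    · simp only [Prod.fst_add, Prod.smul_fst, smul_eq_mul, hcdef]; ring
    · simp only [Prod.snd_add, Prod.smul_snd, smul_eq_mul, hddef]; ring
  have hz0 : a + t₀ • b = (c, d) := by
    have := hcomp 0
    simpa using this
  rcases eq_or_ne c 0 with hc0 | hc0
  · -- degenerate: value is ⊥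
    filter_upwards with r
    rw [hz0, phi, if_pos hc0]
    exact bot_le
  have hX0 : 0 < ‖c‖ := norm_pos_iff.mpr hc0
  set ε : ℝ := min 1 (min (‖c‖ / (2*(‖b.1‖ + 1)))
    (if d = 0 then 1 else ‖d‖ / (2*(‖b.2‖ + 1)))) with hεdef
  have hεpos : 0 < ε := by
    apply lt_min one_pos
    apply lt_min (by positivity)
    split
    · exact one_pos
    · have : d ≠ 0 := by assumption
      have := norm_pos_iff.mpr this
      positivity
  filter_upwards [Ioo_mem_nhdsGT_of_mem (show (0:ℝ) ∈ Ico 0 ε from ⟨le_refl 0, hεpos⟩)]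
    with r hr
  obtain ⟨hr0, hrε⟩ := hr
  have hr1 : r < 1 := hrε.trans_le (min_le_left _ _)
  have hrb1 : r * ‖b.1‖ < ‖c‖ / 2 := by
    have h1 : r < ‖c‖ / (2*(‖b.1‖ + 1)) :=
      hrε.trans_le ((min_le_right _ _).trans (min_le_left _ _))
    have hb1 : (0:ℝ) ≤ ‖b.1‖ := norm_nonneg _
    rw [lt_div_iff₀ (by positivity)] at h1
    nlinarith
  have hrb1' : r * ‖b.1‖ < ‖c‖ := hrb1.trans (by linarith)
  have hrd : d = 0 ∨ r * ‖b.2‖ < ‖d‖ := by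
    rcases eq_or_ne d 0 with hd0 | hd0
    · exact Or.inl hd0
    · right
      have h1 : r < ‖d‖ / (2*(‖b.2‖ + 1)) := by
        have := hrε.trans_le ((min_le_right _ _).trans (min_le_right _ _))
        rwa [if_neg hd0] at this
      have hb2 : (0:ℝ) ≤ ‖b.2‖ := norm_nonneg _
      have hd0' : 0 < ‖d‖ := norm_pos_iff.mpr hd0
      rw [lt_div_iff₀ (by positivity)] at h1
      nlinarith
  -- notation for circle points
  set E : ℝ → ℂ := fun θ => (r:ℂ) * Complex.exp ((θ:ℂ) * Complex.I) with hE
  have habsE : ∀ θ : ℝ, ‖E θ‖ = r := fun θ => abs_E r hr0.le θ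
  have hEcont : Continuous E :=
    continuous_const.mul (Complex.continuous_exp.comp (Complex.continuous_ofReal.mul
      continuous_const))
  have hfpos : ∀ θ : ℝ, ‖c‖ / 2 ≤ ‖c + E θ * b.1‖ := by
    intro θ
    have h1 : ‖E θ * b.1‖ = r * ‖b.1‖ := by rw [norm_mul, habsE]
    have := abs_add_lower c (E θ * b.1)
    rw [h1] at this
    linarith
  have hfne : ∀ θ : ℝ, c + E θ * b.1 ≠ 0 := by
    intro θ
    apply norm_pos_iff.mp
    calc (0:ℝ) < ‖c‖ / 2 := by positivity
      _ ≤ _ := hfpos θ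
  have hfup : ∀ θ : ℝ, ‖c + E θ * b.1‖ ≤ 2 * ‖c‖ := by
    intro θ
    have h1 : ‖E θ * b.1‖ = r * ‖b.1‖ := by rw [norm_mul, habsE]
    have := norm_add_le c (E θ * b.1)
    rw [h1] at this
    linarith
  set C : ℝ := max 1 (‖d‖ + ‖b.2‖) with hC
  have hC1 : (1:ℝ) ≤ C := le_max_left _ _
  have hgup : ∀ θ : ℝ, ‖d + E θ * b.2‖ ≤ C := by
    intro θ
    have h1 : ‖E θ * b.2‖ = r * ‖b.2‖ := by rw [norm_mul, habsE]
    have h2 := norm_add_le d (E θ * b.2)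
    rw [h1] at h2
    refine h2.trans (le_trans ?_ (le_max_right _ _))
    have : r * ‖b.2‖ ≤ ‖b.2‖ :=
      mul_le_of_le_one_left (norm_nonneg _) hr1.le
    linarith
  -- uniform bound on the terms on the circle
  set K : ℝ := |Real.log (‖c‖ / 2)| + |Real.log (2 * ‖c‖ + Ymax M C)|
    with hK
  have hTbound : ∀ (k : ℕ) (θ : ℝ),
      |phiTerm M (k+1) (c + E θ * b.1, d + E θ * b.2)| ≤ M ^ (-(k+1:ℕ) : ℤ) * K := by
    intro k θ
    exact phiTerm_abs_le (M := M) (z := (c + E θ * b.1, d + E θ * b.2))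
      (A := ‖c‖ / 2) (D := 2 * ‖c‖) (C := C)
      hM (div_pos hX0 two_pos) (hfpos θ) (hfup θ) hC1 (hgup θ) k
  -- continuity of the summed series along the circle
  have hzcont : Continuous fun θ : ℝ => ((c + E θ * b.1, d + E θ * b.2) : ℂ × ℂ) :=
    (continuous_const.add (hEcont.mul continuous_const)).prodMk
      (continuous_const.add (hEcont.mul continuous_const))
  have hScont : Continuous fun θ : ℝ =>
      ∑' k : ℕ, phiTerm M (k+1) ((c + E θ * b.1, d + E θ * b.2) : ℂ × ℂ) := by
    rw [continuous_iff_continuousAt]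
    intro θ
    exact ContinuousAt.comp (g := fun w : ℂ × ℂ => ∑' k : ℕ, phiTerm M (k+1) w) (x := θ)
      (continuousAt_S hM (hfne θ)) hzcont.continuousAt
  have hTcont : ∀ k : ℕ, Continuous fun θ : ℝ =>
      phiTerm M (k+1) ((c + E θ * b.1, d + E θ * b.2) : ℂ × ℂ) := by
    intro k
    rw [continuous_iff_continuousAt]
    intro θ
    have hct : ContinuousAt (fun w : ℂ × ℂ => phiTerm M (k+1) w)
        ((c + E θ * b.1, d + E θ * b.2) : ℂ × ℂ) := by
      have : ((c + E θ * b.1, d + E θ * b.2) : ℂ × ℂ).1 ≠ 0 := hfne θ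
      exact continuousAt_phiTerm hM k this
    exact ContinuousAt.comp (g := fun w : ℂ × ℂ => phiTerm M (k+1) w) (x := θ) hct
      hzcont.continuousAt
  have hlogfcont : Continuous fun θ : ℝ => Real.log (‖c + E θ * b.1‖) := by
    rw [continuous_iff_continuousAt]
    intro θ
    have hp : (0:ℝ) < ‖c + E θ * b.1‖ := lt_of_lt_of_le (by positivity) (hfpos θ)
    exact ContinuousAt.comp (x := θ) (Real.continuousAt_log hp.ne')
      (continuous_norm.comp (continuous_const.add (hEcont.mul
        continuous_const))).continuousAt
  -- circle average of log |f|
  have hIX : ∫ θ in (0:ℝ)..(2*Real.pi), Real.log (‖c + E θ * b.1‖)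
      = 2*Real.pi*Real.log (‖c‖) := by
    have he : ∀ θ ∈ uIcc (0:ℝ) (2*Real.pi),
        Real.log (‖c + E θ * b.1‖) =
        Real.log (‖c + ((r:ℂ)*b.1) * Complex.exp ((θ:ℂ) * Complex.I)‖) := by
      intro θ _; rw [hE]; ring_nf
    rw [intervalIntegral.integral_congr he]
    apply integral_log_abs_affine
    rw [norm_mul, Complex.norm_real, Real.norm_eq_abs, _root_.abs_of_nonneg hr0.le]
    exact hrb1'
  -- swap sum and integral
  have hswap : ∫ θ in (0:ℝ)..(2*Real.pi),
      (∑' k : ℕ, phiTerm M (k+1) ((c + E θ * b.1, d + E θ * b.2) : ℂ × ℂ))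
      = ∑' k : ℕ, ∫ θ in (0:ℝ)..(2*Real.pi),
          phiTerm M (k+1) ((c + E θ * b.1, d + E θ * b.2) : ℂ × ℂ) := by
    have h2π : (0:ℝ) ≤ 2*Real.pi := Real.two_pi_pos.le
    rw [intervalIntegral.integral_of_le h2π]
    have hconv : ∀ k : ℕ, (∫ θ in Set.Ioc (0:ℝ) (2*Real.pi),
        phiTerm M (k+1) ((c + E θ * b.1, d + E θ * b.2) : ℂ × ℂ))
        = ∫ θ in (0:ℝ)..(2*Real.pi),
            phiTerm M (k+1) ((c + E θ * b.1, d + E θ * b.2) : ℂ × ℂ) := by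
      intro k
      rw [intervalIntegral.integral_of_le h2π]
    rw [← tsum_congr hconv]
    apply MeasureTheory.integral_tsum
    · exact fun k => ((hTcont k).aestronglyMeasurable).restrict
    · -- finiteness of the sum of lintegrals
      apply ne_of_lt
      calc ∑' k : ℕ, ∫⁻ θ in Set.Ioc (0:ℝ) (2*Real.pi),
            ‖phiTerm M (k+1) ((c + E θ * b.1, d + E θ * b.2) : ℂ × ℂ)‖₊ ∂volume
          ≤ ∑' k : ℕ, ENNReal.ofReal (M ^ (-(k+1:ℕ) : ℤ) * K) * ENNReal.ofReal (2*Real.pi) := by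
            apply ENNReal.tsum_le_tsum
            intro k
            calc ∫⁻ θ in Set.Ioc (0:ℝ) (2*Real.pi),
                  (‖phiTerm M (k+1) ((c + E θ * b.1, d + E θ * b.2) : ℂ × ℂ)‖₊ : ℝ≥0∞) ∂volume
                ≤ ∫⁻ _ in Set.Ioc (0:ℝ) (2*Real.pi),
                    ENNReal.ofReal (M ^ (-(k+1:ℕ) : ℤ) * K) ∂volume := by
                  apply lintegral_mono
                  intro θ
                  refine le_trans (le_of_eq (ofReal_norm (phiTerm M (k+1) ((c + E θ * b.1, d + E θ * b.2) : ℂ × ℂ))).symm)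
                    (ENNReal.ofReal_le_ofReal ?_)
                  rw [Real.norm_eq_abs]
                  exact hTbound k θ
              _ = ENNReal.ofReal (M ^ (-(k+1:ℕ) : ℤ) * K) * volume (Set.Ioc (0:ℝ) (2*Real.pi))
                  := by rw [MeasureTheory.lintegral_const,
                    MeasureTheory.Measure.restrict_apply_univ]
              _ = ENNReal.ofReal (M ^ (-(k+1:ℕ) : ℤ) * K) * ENNReal.ofReal (2*Real.pi) := by
                  rw [Real.volume_Ioc, sub_zero]
        _ = (∑' k : ℕ, ENNReal.ofReal (M ^ (-(k+1:ℕ) : ℤ) * K)) * ENNReal.ofReal (2*Real.pi)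
            := ENNReal.tsum_mul_right
        _ < ⊤ := by
            apply ENNReal.mul_lt_top _ ENNReal.ofReal_lt_top
            have hKnn : 0 ≤ K := by positivity
            rw [← ENNReal.ofReal_tsum_of_nonneg (fun k => by positivity)
              (summable_geom_mul hM K)]
            exact ENNReal.ofReal_lt_top
  -- per-term circle inequality
  have hperk : ∀ k : ℕ, phiTerm M (k+1) ((c, d) : ℂ × ℂ)
      ≤ (2*Real.pi)⁻¹ * ∫ θ in (0:ℝ)..(2*Real.pi),
          phiTerm M (k+1) ((c + E θ * b.1, d + E θ * b.2) : ℂ × ℂ) := by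
    intro k
    have h := key_term_ineq hM c b.1 d b.2 hr0 hrb1' hrd k
    have h2π : (0:ℝ) < 2*Real.pi := Real.two_pi_pos
    rw [inv_mul_eq_div, le_div_iff₀ h2π]
    linarith [h]
  -- summability of the circle integrals
  have hsummI : Summable (fun k : ℕ => (2*Real.pi)⁻¹ * ∫ θ in (0:ℝ)..(2*Real.pi),
      phiTerm M (k+1) ((c + E θ * b.1, d + E θ * b.2) : ℂ × ℂ)) := by
    apply Summable.of_norm_bounded (summable_geom_mul hM K)
    intro k
    rw [Real.norm_eq_abs, abs_mul, _root_.abs_of_nonneg (by positivity :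
      (0:ℝ) ≤ (2*Real.pi)⁻¹)]
    have hb := intervalIntegral.norm_integral_le_of_norm_le_const (C := M ^ (-(k+1:ℕ) : ℤ) * K)
      (a := (0:ℝ)) (b := 2*Real.pi)
      (f := fun θ : ℝ => phiTerm M (k+1) ((c + E θ * b.1, d + E θ * b.2) : ℂ × ℂ))
      (fun θ _ => by rw [Real.norm_eq_abs]; exact hTbound k θ)
    rw [Real.norm_eq_abs] at hb
    have h2π : (0:ℝ) < 2*Real.pi := Real.two_pi_pos
    calc (2*Real.pi)⁻¹ * |∫ θ in (0:ℝ)..(2*Real.pi),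
          phiTerm M (k+1) ((c + E θ * b.1, d + E θ * b.2) : ℂ × ℂ)|
        ≤ (2*Real.pi)⁻¹ * (M ^ (-(k+1:ℕ) : ℤ) * K * |2*Real.pi - 0|) := by
          apply mul_le_mul_of_nonneg_left _ (by positivity)
          exact hb
      _ = M ^ (-(k+1:ℕ) : ℤ) * K := by
          rw [sub_zero, _root_.abs_of_pos h2π]
          field_simp
  -- now state the real inequality
  rw [hz0, phi, if_neg hc0]
  have hintgr : ∀ θ : ℝ,
      (phi M (a + (t₀ + (r:ℂ) * Complex.exp ((θ:ℂ) * Complex.I)) • b)).toReal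
      = Real.log (‖c + E θ * b.1‖)
        + ∑' k : ℕ, phiTerm M (k+1) ((c + E θ * b.1, d + E θ * b.2) : ℂ × ℂ) := by
    intro θ
    rw [hcomp (E θ), phi, if_neg (hfne θ)]
    rfl
  have hIrw : (∫ θ in (0:ℝ)..(2 * Real.pi),
      (phi M (a + (t₀ + (r:ℂ) * Complex.exp ((θ:ℂ) * Complex.I)) • b)).toReal)
      = 2*Real.pi*Real.log (‖c‖)
        + ∑' k : ℕ, ∫ θ in (0:ℝ)..(2*Real.pi),
            phiTerm M (k+1) ((c + E θ * b.1, d + E θ * b.2) : ℂ × ℂ) := by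
    rw [intervalIntegral.integral_congr (fun θ _ => hintgr θ)]
    rw [intervalIntegral.integral_add (hlogfcont.intervalIntegrable _ _)
      (hScont.intervalIntegrable _ _)]
    rw [hIX, hswap]
  rw [hIrw]
  rw [EReal.coe_le_coe_iff]
  have hsum : (∑' k : ℕ, phiTerm M (k+1) ((c, d) : ℂ × ℂ))
      ≤ (2*Real.pi)⁻¹ * ∑' k : ℕ, ∫ θ in (0:ℝ)..(2*Real.pi),
          phiTerm M (k+1) ((c + E θ * b.1, d + E θ * b.2) : ℂ × ℂ) := by
    rw [← tsum_mul_left]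
    exact Summable.tsum_le_tsum hperk (summable_phiTerm hM (c, d) hc0) hsummI
  have h2π : (0:ℝ) < 2*Real.pi := Real.two_pi_pos
  have hexpand : (2*Real.pi)⁻¹ * (2*Real.pi*Real.log (‖c‖)
      + ∑' k : ℕ, ∫ θ in (0:ℝ)..(2*Real.pi),
          phiTerm M (k+1) ((c + E θ * b.1, d + E θ * b.2) : ℂ × ℂ))
      = Real.log (‖c‖) + (2*Real.pi)⁻¹ * ∑' k : ℕ, ∫ θ in (0:ℝ)..(2*Real.pi),
          phiTerm M (k+1) ((c + E θ * b.1, d + E θ * b.2) : ℂ × ℂ) := by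
    rw [mul_add, ← mul_assoc, inv_mul_cancel₀ h2π.ne', one_mul]
  rw [hexpand]
  have : (∑' k : ℕ, phiTerm M (k + 1) ((c, d) : ℂ × ℂ)) =
      ∑' k : ℕ, phiTerm M (k+1) ((c, d) : ℂ × ℂ) := rfl
  linarith [hsum]

end GuanLiAux

/-- Fix `M ≥ 2`, `α_k = M^{-k}`, `β_k = M^{2k}`. The series
`φ(z) = log|z₁| + ∑_{k≥1} α_k log(|z₁| + |z₂/k|^{β_k})` converges (for `z₁ ≠ 0`)
and defines a plurisubharmonic function on `ℂ²` which is not identically `-∞`. -/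
theorem stmt5 (M : ℝ) (hM : 2 ≤ M) :
    (∀ z : ℂ × ℂ, z.1 ≠ 0 → Summable (fun k : ℕ => phiTerm M (k + 1) z)) ∧
      PSHOn (phi M) univ ∧
      ∃ z : ℂ × ℂ, phi M z ≠ ⊥ := by
  refine ⟨fun z hz => summable_phiTerm hM z hz, ⟨(usc_phi hM).upperSemicontinuousOn _, ?_⟩,
    ⟨((1:ℂ), (0:ℂ)), ?_⟩⟩
  · intro a b
    constructor
    · intro t _ y hy
      have hL : Tendsto (fun t : ℂ => a + t • b) (𝓝[{t : ℂ | a + t • b ∈ univ}] t)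
          (𝓝 (a + t • b)) :=
        ((continuous_const.add (continuous_id.smul continuous_const)).continuousAt).tendsto.mono_left
          nhdsWithin_le_nhds
      exact hL.eventually (usc_phi hM (a + t • b) y hy)
    · intro t _
      exact submean hM a b t
  · rw [phi, if_neg (by norm_num : (((1:ℂ), (0:ℂ)) : ℂ × ℂ).1 ≠ 0)]
    exact EReal.coe_ne_bot _
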